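/- Let r > 0, {v₀,v₁,w} a positive oriented orthonormal system, k₀ = √(1+r²)/r, and α(t) = √(1+r²) w + r cos(2πt) v₁ + r sin(2πt) v₀. Let λ₁, λ₂ : ℝ → ℝ be C² and set V(t) = λ₁(t) α̇(t) + λ₂(t) (α(t) ×ₘ α̇(t)). Then the linearization expression L V := −D_t²V + ⟨α̇,α̇⟩ₘ V − ⟨V, α̇⟩ₘ α̇ + |α̇|ₘ⁻¹ ⟨D_tV, α̇⟩ₘ k₀ (α ×ₘ α̇) + |α̇|ₘ k₀ (α ×ₘ D_tV) satisfies L V(t) = (−λ₁''(t) + 2π√(1+r²) λ₂'(t)) α̇(t) + (−λ₂''(t) − 4π² λ₂(t)) (α(t) ×ₘ α̇(t)) for all t. -/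

import Mathlib

noncomputable section

open Real

/-- The Minkowski inner product on ℝ³. -/
def mink (v w : Fin 3 → ℝ) : ℝ := v 0 * w 0 + v 1 * w 1 - v 2 * w 2

/-- The twisted cross product on ℝ³. -/
def mcross (v w : Fin 3 → ℝ) : Fin 3 → ℝ :=
  ![v 2 * w 1 - v 1 * w 2, v 0 * w 2 - v 2 * w 0, v 0 * w 1 - v 1 * w 0]

/-- A positive oriented orthonormal system with respect to the Minkowski metric. -/
def posOrth (v₀ v₁ w : Fin 3 → ℝ) : Prop :=
  mink v₀ v₁ = 0 ∧ mink v₀ w = 0 ∧ mink v₁ w = 0 ∧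
  mink v₀ v₀ = 1 ∧ mink v₁ v₁ = 1 ∧ mink w w = -1 ∧
  mcross v₀ v₁ = w

/-- Membership in the hyperbolic plane ℍ ⊂ ℝ³. -/
def inH (x : Fin 3 → ℝ) : Prop := x 2 ^ 2 - x 0 ^ 2 - x 1 ^ 2 = 1 ∧ 0 < x 2

/-- The covariant derivative on ℍ of a tangent vector field `V` along a curve `γ` in ℍ:
`D_t V(t) = V̇(t) + ⟨V̇(t), γ(t)⟩ₘ γ(t)`. -/
def covDt (γ V : ℝ → Fin 3 → ℝ) : ℝ → Fin 3 → ℝ :=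
  fun t => deriv V t + mink (deriv V t) (γ t) • γ t

/-- The linearization of the prescribed geodesic curvature operator along a curve α in ℍ:
`L W = −D_t²W + ⟨α̇,α̇⟩ₘ W − ⟨W,α̇⟩ₘ α̇ + |α̇|ₘ⁻¹ ⟨D_tW,α̇⟩ₘ k₀ (α ×ₘ α̇) + |α̇|ₘ k₀ (α ×ₘ D_tW)`. -/
def linOp (k₀ : ℝ) (α W : ℝ → Fin 3 → ℝ) (t : ℝ) : Fin 3 → ℝ :=
  -(covDt α (covDt α W) t) + mink (deriv α t) (deriv α t) • W t
    - mink (W t) (deriv α t) • deriv α t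
    + ((Real.sqrt (mink (deriv α t) (deriv α t)))⁻¹ * mink (covDt α W t) (deriv α t) * k₀) •
        mcross (α t) (deriv α t)
    + (Real.sqrt (mink (deriv α t) (deriv α t)) * k₀) • mcross (α t) (covDt α W t)


section AuxLemmas

variable {v₀ v₁ w : Fin 3 → ℝ}

lemma mink_comm' (a b : Fin 3 → ℝ) : mink a b = mink b a := by simp [mink]; ring

lemma mcross_self' (a : Fin 3 → ℝ) : mcross a a = 0 := by
  funext i; fin_cases i <;> simp [mcross] <;> ring

lemma mcross_anti' (a b : Fin 3 → ℝ) : mcross a b = -mcross b a := by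
  funext i; fin_cases i <;> simp [mcross] <;> ring

lemma mcross_mcross' (a b c : Fin 3 → ℝ) :
    mcross a (mcross b c) = mink a b • c - mink a c • b := by
  funext i; fin_cases i <;> simp [mcross, mink] <;> ring

lemma mcross_add_left' (a b c : Fin 3 → ℝ) : mcross (a + b) c = mcross a c + mcross b c := by
  funext i; fin_cases i <;> simp [mcross] <;> ring

lemma mcross_add_right' (a b c : Fin 3 → ℝ) : mcross a (b + c) = mcross a b + mcross a c := by
  funext i; fin_cases i <;> simp [mcross] <;> ring

lemma mcross_smul_left' (x : ℝ) (a c : Fin 3 → ℝ) : mcross (x • a) c = x • mcross a c := by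
  funext i; fin_cases i <;> simp [mcross] <;> ring

lemma mcross_smul_right' (x : ℝ) (a c : Fin 3 → ℝ) : mcross a (x • c) = x • mcross a c := by
  funext i; fin_cases i <;> simp [mcross] <;> ring

lemma mink_expand (hsys : posOrth v₀ v₁ w) (x₁ y₁ z₁ x₂ y₂ z₂ : ℝ) :
    mink (x₁ • v₀ + y₁ • v₁ + z₁ • w) (x₂ • v₀ + y₂ • v₁ + z₂ • w)
      = x₁ * x₂ + y₁ * y₂ - z₁ * z₂ := by
  obtain ⟨h1, h2, h3, h4, h5, h6, -⟩ := hsys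
  simp only [mink, Pi.add_apply, Pi.smul_apply, smul_eq_mul] at *
  linear_combination x₁*x₂*h4 + y₁*y₂*h5 + z₁*z₂*h6 + (x₁*y₂+y₁*x₂)*h1 + (x₁*z₂+z₁*x₂)*h2 + (y₁*z₂+z₁*y₂)*h3

lemma mcross_expand (hsys : posOrth v₀ v₁ w) (x₁ y₁ z₁ x₂ y₂ z₂ : ℝ) :
    mcross (x₁ • v₀ + y₁ • v₁ + z₁ • w) (x₂ • v₀ + y₂ • v₁ + z₂ • w)
      = (z₁ * y₂ - y₁ * z₂) • v₀ + (x₁ * z₂ - z₁ * x₂) • v₁ + (x₁ * y₂ - y₁ * x₂) • w := by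
  obtain ⟨h1, h2, h3, h4, h5, h6, h7⟩ := hsys
  have hv0w : mcross v₀ w = v₁ := by
    rw [← h7, mcross_mcross', h4, h1]; simp
  have hv1w : mcross v₁ w = -v₀ := by
    rw [← h7, mcross_mcross', h5, mink_comm' v₁ v₀, h1]; simp
  have hwv0 : mcross w v₀ = -v₁ := by rw [mcross_anti', hv0w]
  have hwv1 : mcross w v₁ = v₀ := by rw [mcross_anti', hv1w]; simp
  have hv1v0 : mcross v₁ v₀ = -w := by rw [mcross_anti', h7]
  simp only [mcross_add_left', mcross_add_right', mcross_smul_left', mcross_smul_right',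
    mcross_self', h7, hv0w, hv1w, hwv0, hwv1, hv1v0]
  module

end AuxLemmas

/-- the linearized operator in the moving frame {α̇, α ×ₘ α̇}:
for V = λ₁ α̇ + λ₂ (α ×ₘ α̇),
L V = (−λ₁'' + 2π√(1+r²) λ₂') α̇ + (−λ₂'' − 4π² λ₂)(α ×ₘ α̇). -/
theorem stmt_13 (r : ℝ) (hr : 0 < r) (v₀ v₁ w : Fin 3 → ℝ) (hsys : posOrth v₀ v₁ w)
    (lam₁ lam₂ : ℝ → ℝ) (h₁ : ContDiff ℝ 2 lam₁) (h₂ : ContDiff ℝ 2 lam₂) :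
    let k₀ : ℝ := Real.sqrt (1 + r ^ 2) / r
    let α : ℝ → Fin 3 → ℝ := fun t =>
      Real.sqrt (1 + r ^ 2) • w + (r * Real.cos (2 * Real.pi * t)) • v₁ +
        (r * Real.sin (2 * Real.pi * t)) • v₀
    let V : ℝ → Fin 3 → ℝ := fun t => lam₁ t • deriv α t + lam₂ t • mcross (α t) (deriv α t)
    ∀ t : ℝ,
      linOp k₀ α V t =
        (-(deriv (deriv lam₁) t) + 2 * Real.pi * Real.sqrt (1 + r ^ 2) * deriv lam₂ t) •
            deriv α t +
          (-(deriv (deriv lam₂) t) - 4 * Real.pi ^ 2 * lam₂ t) • mcross (α t) (deriv α t) := by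
  intro k₀ α V t
  obtain ⟨Q, hQdef⟩ : ∃ Q : ℝ, Real.sqrt (1 + r ^ 2) = Q := ⟨_, rfl⟩
  have hQ2 : Q ^ 2 = 1 + r ^ 2 := by rw [← hQdef]; exact Real.sq_sqrt (by positivity)
  have hrne : r ≠ 0 := ne_of_gt hr
  have hπ : Real.pi ≠ 0 := Real.pi_ne_zero
  have hk0 : k₀ = Q / r := by rw [show k₀ = Real.sqrt (1 + r ^ 2) / r from rfl, hQdef]
  have hS : ∀ u : ℝ, HasDerivAt (fun x : ℝ => Real.sin (2 * Real.pi * x)) (2 * Real.pi * Real.cos (2 * Real.pi * u)) u := by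
    intro u
    have h := ((hasDerivAt_id u).const_mul (2 * Real.pi)).sin
    convert h using 1 <;> simp only [id_eq] <;> ring
  have hC : ∀ u : ℝ, HasDerivAt (fun x : ℝ => Real.cos (2 * Real.pi * x)) (-(2 * Real.pi * Real.sin (2 * Real.pi * u))) u := by
    intro u
    have h := ((hasDerivAt_id u).const_mul (2 * Real.pi)).cos
    convert h using 1 <;> simp only [id_eq] <;> ring
  have hl1 : ∀ u : ℝ, HasDerivAt lam₁ (deriv lam₁ u) u := fun u => ((h₁.differentiable (by norm_num)) u).hasDerivAt
  have hl2 : ∀ u : ℝ, HasDerivAt lam₂ (deriv lam₂ u) u := fun u => ((h₂.differentiable (by norm_num)) u).hasDerivAt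
  have hd1 : ∀ u : ℝ, HasDerivAt (deriv lam₁) (deriv (deriv lam₁) u) u := by
    have h2 : ContDiff ℝ 1 (deriv lam₁) := (contDiff_succ_iff_deriv.mp ((show ((1:WithTop ℕ∞)+1) = 2 from rfl) ▸ h₁)).2.2
    exact fun u => ((h2.differentiable one_ne_zero) u).hasDerivAt
  have hd2 : ∀ u : ℝ, HasDerivAt (deriv lam₂) (deriv (deriv lam₂) u) u := by
    have h2 : ContDiff ℝ 1 (deriv lam₂) := (contDiff_succ_iff_deriv.mp ((show ((1:WithTop ℕ∞)+1) = 2 from rfl) ▸ h₂)).2.2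
    exact fun u => ((h2.differentiable one_ne_zero) u).hasDerivAt
  have hαu : ∀ u : ℝ, α u = ((r * (Real.sin (2 * Real.pi * u)) : ℝ)) • v₀ + ((r * (Real.cos (2 * Real.pi * u)) : ℝ)) • v₁ + ((Q : ℝ)) • w := by
    intro u
    show Real.sqrt (1 + r ^ 2) • w + (r * Real.cos (2 * Real.pi * u)) • v₁ + (r * Real.sin (2 * Real.pi * u)) • v₀ = _
    rw [hQdef]; module
  have hαAt : ∀ u : ℝ, HasDerivAt α (((2 * r * Real.pi * (Real.cos (2 * Real.pi * u)) : ℝ)) • v₀ + (((-2) * r * Real.pi * (Real.sin (2 * Real.pi * u)) : ℝ)) • v₁ + ((0 : ℝ)) • w) u := by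
    intro u
    rw [show α = (fun x : ℝ => ((r * (Real.sin (2 * Real.pi * x)) : ℝ)) • v₀ + ((r * (Real.cos (2 * Real.pi * x)) : ℝ)) • v₁ + ((Q : ℝ)) • w) from funext hαu]
    have h1 : HasDerivAt (fun x : ℝ => r * (Real.sin (2 * Real.pi * x))) (2 * r * Real.pi * (Real.cos (2 * Real.pi * u))) u := by
      have h := (((hS u)).const_mul (r))
      exact h.congr_deriv (by ring)
    have h2 : HasDerivAt (fun x : ℝ => r * (Real.cos (2 * Real.pi * x))) ((-2) * r * Real.pi * (Real.sin (2 * Real.pi * u))) u := by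
      have h := (((hC u)).const_mul (r))
      exact h.congr_deriv (by ring)
    have h3 : HasDerivAt (fun x : ℝ => Q) (0) u := by
      have h := hasDerivAt_const u (Q)
      exact h.congr_deriv (by ring)
    exact ((h1.smul_const v₀).add (h2.smul_const v₁)).add (h3.smul_const w)
  have hBt : ∀ u : ℝ, mcross (α u) (deriv α u) = (((-2) * r * Q * Real.pi * (Real.sin (2 * Real.pi * u)) : ℝ)) • v₀ + (((-2) * r * Q * Real.pi * (Real.cos (2 * Real.pi * u)) : ℝ)) • v₁ + (((-2) * r ^ 2 * Real.pi * (Real.cos (2 * Real.pi * u) * (Real.cos (2 * Real.pi * u))) + (-2) * r ^ 2 * Real.pi * (Real.sin (2 * Real.pi * u) * (Real.sin (2 * Real.pi * u))) : ℝ)) • w := by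
    intro u
    rw [hαu u, (hαAt u).deriv, mcross_expand hsys]
    match_scalars <;> ring
  have hVt : ∀ u : ℝ, V u = ((2 * r * Real.pi * (lam₁ u * (Real.cos (2 * Real.pi * u))) + (-2) * r * Q * Real.pi * (lam₂ u * (Real.sin (2 * Real.pi * u))) : ℝ)) • v₀ + (((-2) * r * Real.pi * (lam₁ u * (Real.sin (2 * Real.pi * u))) + (-2) * r * Q * Real.pi * (lam₂ u * (Real.cos (2 * Real.pi * u))) : ℝ)) • v₁ + (((-2) * r ^ 2 * Real.pi * (lam₂ u * (Real.cos (2 * Real.pi * u) * (Real.cos (2 * Real.pi * u)))) + (-2) * r ^ 2 * Real.pi * (lam₂ u * (Real.sin (2 * Real.pi * u) * (Real.sin (2 * Real.pi * u)))) : ℝ)) • w := by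
    intro u
    show lam₁ u • deriv α u + lam₂ u • mcross (α u) (deriv α u) = _
    rw [hBt u, (hαAt u).deriv]
    match_scalars <;> ring
  have hVAt : ∀ u : ℝ, HasDerivAt V (((2 * r * Real.pi * (deriv lam₁ u * (Real.cos (2 * Real.pi * u))) + (-4) * r * Real.pi ^ 2 * (lam₁ u * (Real.sin (2 * Real.pi * u))) + (-2) * r * Q * Real.pi * (deriv lam₂ u * (Real.sin (2 * Real.pi * u))) + (-4) * r * Q * Real.pi ^ 2 * (lam₂ u * (Real.cos (2 * Real.pi * u))) : ℝ)) • v₀ + (((-2) * r * Real.pi * (deriv lam₁ u * (Real.sin (2 * Real.pi * u))) + (-4) * r * Real.pi ^ 2 * (lam₁ u * (Real.cos (2 * Real.pi * u))) + (-2) * r * Q * Real.pi * (deriv lam₂ u * (Real.cos (2 * Real.pi * u))) + 4 * r * Q * Real.pi ^ 2 * (lam₂ u * (Real.sin (2 * Real.pi * u))) : ℝ)) • v₁ + (((-2) * r ^ 2 * Real.pi * (deriv lam₂ u * (Real.cos (2 * Real.pi * u) * (Real.cos (2 * Real.pi * u)))) + (-2) * r ^ 2 * Real.pi * (deriv lam₂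 u * (Real.sin (2 * Real.pi * u) * (Real.sin (2 * Real.pi * u)))) : ℝ)) • w) u := by
    intro u
    rw [show V = (fun x : ℝ => ((2 * r * Real.pi * (lam₁ x * (Real.cos (2 * Real.pi * x))) + (-2) * r * Q * Real.pi * (lam₂ x * (Real.sin (2 * Real.pi * x))) : ℝ)) • v₀ + (((-2) * r * Real.pi * (lam₁ x * (Real.sin (2 * Real.pi * x))) + (-2) * r * Q * Real.pi * (lam₂ x * (Real.cos (2 * Real.pi * x))) : ℝ)) • v₁ + (((-2) * r ^ 2 * Real.pi * (lam₂ x * (Real.cos (2 * Real.pi * x) * (Real.cos (2 * Real.pi * x)))) + (-2) * r ^ 2 * Real.pi * (lam₂ x * (Real.sin (2 * Real.pi * x) * (Real.sin (2 * Real.pi * x)))) : ℝ)) • w) from funext hVt]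
    have h1 : HasDerivAt (fun x : ℝ => 2 * r * Real.pi * (lam₁ x * (Real.cos (2 * Real.pi * x))) + (-2) * r * Q * Real.pi * (lam₂ x * (Real.sin (2 * Real.pi * x)))) (2 * r * Real.pi * (deriv lam₁ u * (Real.cos (2 * Real.pi * u))) + (-4) * r * Real.pi ^ 2 * (lam₁ u * (Real.sin (2 * Real.pi * u))) + (-2) * r * Q * Real.pi * (deriv lam₂ u * (Real.sin (2 * Real.pi * u))) + (-4) * r * Q * Real.pi ^ 2 * (lam₂ u * (Real.cos (2 * Real.pi * u)))) u := by
      have h := ((((hl1 u).mul ((hC u))).const_mul (2 * r * Real.pi))).add (((hl2 u).mul ((hS u))).const_mul ((-2) * r * Q * Real.pi))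
      exact h.congr_deriv (by ring)
    have h2 : HasDerivAt (fun x : ℝ => (-2) * r * Real.pi * (lam₁ x * (Real.sin (2 * Real.pi * x))) + (-2) * r * Q * Real.pi * (lam₂ x * (Real.cos (2 * Real.pi * x)))) ((-2) * r * Real.pi * (deriv lam₁ u * (Real.sin (2 * Real.pi * u))) + (-4) * r * Real.pi ^ 2 * (lam₁ u * (Real.cos (2 * Real.pi * u))) + (-2) * r * Q * Real.pi * (deriv lam₂ u * (Real.cos (2 * Real.pi * u))) + 4 * r * Q * Real.pi ^ 2 * (lam₂ u * (Real.sin (2 * Real.pi * u)))) u := by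
      have h := ((((hl1 u).mul ((hS u))).const_mul ((-2) * r * Real.pi))).add (((hl2 u).mul ((hC u))).const_mul ((-2) * r * Q * Real.pi))
      exact h.congr_deriv (by ring)
    have h3 : HasDerivAt (fun x : ℝ => (-2) * r ^ 2 * Real.pi * (lam₂ x * (Real.cos (2 * Real.pi * x) * (Real.cos (2 * Real.pi * x)))) + (-2) * r ^ 2 * Real.pi * (lam₂ x * (Real.sin (2 * Real.pi * x) * (Real.sin (2 * Real.pi * x))))) ((-2) * r ^ 2 * Real.pi * (deriv lam₂ u * (Real.cos (2 * Real.pi * u) * (Real.cos (2 * Real.pi * u)))) + (-2) * r ^ 2 * Real.pi * (deriv lam₂ u * (Real.sin (2 * Real.pi * u) * (Real.sin (2 * Real.pi * u))))) u := by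
      have h := ((((hl2 u).mul ((hC u).mul ((hC u)))).const_mul ((-2) * r ^ 2 * Real.pi))).add (((hl2 u).mul ((hS u).mul ((hS u)))).const_mul ((-2) * r ^ 2 * Real.pi))
      exact h.congr_deriv (by simp only [Pi.mul_apply]; ring)
    exact ((h1.smul_const v₀).add (h2.smul_const v₁)).add (h3.smul_const w)
  have hWcov : ∀ u : ℝ, covDt α V u = ((2 * r * Real.pi * (deriv lam₁ u * (Real.cos (2 * Real.pi * u))) + (-4) * r * Real.pi ^ 2 * (lam₁ u * (Real.sin (2 * Real.pi * u))) + (-2) * r * Q * Real.pi * (deriv lam₂ u * (Real.sin (2 * Real.pi * u))) + (-4) * r * Q * Real.pi ^ 2 * (lam₂ u * (Real.cos (2 * Real.pi * u))) + (-4) * r ^ 3 * Real.pi ^ 2 * (lam₁ u * (Real.sin (2 * Real.pi * u))) : ℝ)) • v₀ + (((-2) * r * Real.pi * (deriv lam₁ u * (Real.sin (2 * Real.pi * u))) + (-4) * r * Real.pi ^ 2 * (lam₁ u * (Real.cos (2 * Real.pi * u))) + (-2) * r * Q * Real.pi * (deriv lam₂ u * (Real.cos (2 * Real.pi * u))) +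 4 * r * Q * Real.pi ^ 2 * (lam₂ u * (Real.sin (2 * Real.pi * u))) + (-4) * r ^ 3 * Real.pi ^ 2 * (lam₁ u * (Real.cos (2 * Real.pi * u))) : ℝ)) • v₁ + (((-2) * r ^ 2 * Real.pi * (deriv lam₂ u) + (-4) * r ^ 2 * Q * Real.pi ^ 2 * (lam₁ u) : ℝ)) • w := by
    intro u
    show deriv V u + mink (deriv V u) (α u) • α u = _
    rw [(hVAt u).deriv, hαu u, mink_expand hsys]
    match_scalars
    all_goals first | (linear_combination ((-4) * r ^ 3 * Real.pi ^ 2 * (lam₁ u * (Real.sin (2 * Real.pi * u)))) * Real.sin_sq_add_cos_sq (2 * Real.pi * u)) | (linear_combination ((-4) * r ^ 3 * Real.pi ^ 2 * (lam₁ u * (Real.cos (2 * Real.pi * u)))) * Real.sin_sq_add_cos_sq (2 * Real.pi * u)) | (linear_combination ((-2) * r ^ 2 * Real.pi * (deriv lam₂ u) + (-4) * r ^ 2 * Q * Real.pi ^ 2 * (lam₁ u)) * Real.sin_sq_add_cos_sq (2 * Real.pi * u)) | (ring1)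
  have hWAt : HasDerivAt (covDt α V) (((2 * r * Real.pi * (Real.cos (2 * Real.pi * t) * (deriv (deriv lam₁) t)) + (-8) * r * Real.pi ^ 2 * (deriv lam₁ t * (Real.sin (2 * Real.pi * t))) + (-8) * r * Real.pi ^ 3 * (lam₁ t * (Real.cos (2 * Real.pi * t))) + (-2) * r * Q * Real.pi * (Real.sin (2 * Real.pi * t) * (deriv (deriv lam₂) t)) + (-8) * r * Q * Real.pi ^ 2 * (deriv lam₂ t * (Real.cos (2 * Real.pi * t))) + 8 * r * Q * Real.pi ^ 3 * (lam₂ t * (Real.sin (2 * Real.pi * t))) + (-4) * r ^ 3 * Real.pi ^ 2 * (deriv lam₁ t * (Real.sin (2 * Real.pi * t))) + (-8) * r ^ 3 * Real.pi ^ 3 * (lam₁ t * (Real.cos (2 * Real.pi * t))) : ℝ)) • v₀ + (((-2) * r * Real.pi * (Real.sin (2 * Real.pi * t) * (deriv (deriv lam₁) t)) + (-8) * r * Real.pi ^ 2 * (deriv lam₁ t * (Real.cos (2 * Real.pi * t))) + 8 * r * Real.pi ^ 3 * (lam₁ t * (Real.sin (2 * Real.pi * t))) + (-2) * r * Q * Real.pi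 * (Real.cos (2 * Real.pi * t) * (deriv (deriv lam₂) t)) + 8 * r * Q * Real.pi ^ 2 * (deriv lam₂ t * (Real.sin (2 * Real.pi * t))) + 8 * r * Q * Real.pi ^ 3 * (lam₂ t * (Real.cos (2 * Real.pi * t))) + (-4) * r ^ 3 * Real.pi ^ 2 * (deriv lam₁ t * (Real.cos (2 * Real.pi * t))) + 8 * r ^ 3 * Real.pi ^ 3 * (lam₁ t * (Real.sin (2 * Real.pi * t))) : ℝ)) • v₁ + (((-2) * r ^ 2 * Real.pi * (deriv (deriv lam₂) t) + (-4) * r ^ 2 * Q * Real.pi ^ 2 * (deriv lam₁ t) : ℝ)) • w) t := by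
    rw [show covDt α V = (fun x : ℝ => ((2 * r * Real.pi * (deriv lam₁ x * (Real.cos (2 * Real.pi * x))) + (-4) * r * Real.pi ^ 2 * (lam₁ x * (Real.sin (2 * Real.pi * x))) + (-2) * r * Q * Real.pi * (deriv lam₂ x * (Real.sin (2 * Real.pi * x))) + (-4) * r * Q * Real.pi ^ 2 * (lam₂ x * (Real.cos (2 * Real.pi * x))) + (-4) * r ^ 3 * Real.pi ^ 2 * (lam₁ x * (Real.sin (2 * Real.pi * x))) : ℝ)) • v₀ + (((-2) * r * Real.pi * (deriv lam₁ x * (Real.sin (2 * Real.pi * x))) + (-4) * r * Real.pi ^ 2 * (lam₁ x * (Real.cos (2 * Real.pi * x))) + (-2) * r * Q * Real.pi * (deriv lam₂ x * (Real.cos (2 * Real.pi * x))) + 4 * r * Q * Real.pi ^ 2 * (lam₂ x * (Real.sin (2 * Real.pi * x))) + (-4) * r ^ 3 * Real.pi ^ 2 * (lam₁ x * (Real.cos (2 * Real.pi * x))) : ℝ)) • v₁ + (((-2) * r ^ 2 * Real.pi * (deriv lam₂ x) + (-4) * r ^ 2 * Q * Real.pi ^ 2 * (lam₁ x) : ℝ))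 • w) from funext hWcov]
    have h1 : HasDerivAt (fun x : ℝ => 2 * r * Real.pi * (deriv lam₁ x * (Real.cos (2 * Real.pi * x))) + (-4) * r * Real.pi ^ 2 * (lam₁ x * (Real.sin (2 * Real.pi * x))) + (-2) * r * Q * Real.pi * (deriv lam₂ x * (Real.sin (2 * Real.pi * x))) + (-4) * r * Q * Real.pi ^ 2 * (lam₂ x * (Real.cos (2 * Real.pi * x))) + (-4) * r ^ 3 * Real.pi ^ 2 * (lam₁ x * (Real.sin (2 * Real.pi * x)))) (2 * r * Real.pi * (Real.cos (2 * Real.pi * t) * (deriv (deriv lam₁) t)) + (-8) * r * Real.pi ^ 2 * (deriv lam₁ t * (Real.sin (2 * Real.pi * t))) + (-8) * r * Real.pi ^ 3 * (lam₁ t * (Real.cos (2 * Real.pi * t))) + (-2) * r * Q * Real.pi * (Real.sin (2 * Real.pi * t) * (deriv (deriv lam₂) t)) + (-8) * r * Q * Real.pi ^ 2 * (deriv lam₂ t * (Real.cos (2 * Real.pi * t))) + 8 * r * Q * Real.pi ^ 3 * (lam₂ t * (Real.sin (2 * Real.pi * t))) + (-4) * r ^ 3 * Real.pi ^ 2 *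 (deriv lam₁ t * (Real.sin (2 * Real.pi * t))) + (-8) * r ^ 3 * Real.pi ^ 3 * (lam₁ t * (Real.cos (2 * Real.pi * t)))) t := by
      have h := (((((((hd1 t).mul ((hC t))).const_mul (2 * r * Real.pi))).add (((hl1 t).mul ((hS t))).const_mul ((-4) * r * Real.pi ^ 2))).add (((hd2 t).mul ((hS t))).const_mul ((-2) * r * Q * Real.pi))).add (((hl2 t).mul ((hC t))).const_mul ((-4) * r * Q * Real.pi ^ 2))).add (((hl1 t).mul ((hS t))).const_mul ((-4) * r ^ 3 * Real.pi ^ 2))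
      exact h.congr_deriv (by ring)
    have h2 : HasDerivAt (fun x : ℝ => (-2) * r * Real.pi * (deriv lam₁ x * (Real.sin (2 * Real.pi * x))) + (-4) * r * Real.pi ^ 2 * (lam₁ x * (Real.cos (2 * Real.pi * x))) + (-2) * r * Q * Real.pi * (deriv lam₂ x * (Real.cos (2 * Real.pi * x))) + 4 * r * Q * Real.pi ^ 2 * (lam₂ x * (Real.sin (2 * Real.pi * x))) + (-4) * r ^ 3 * Real.pi ^ 2 * (lam₁ x * (Real.cos (2 * Real.pi * x)))) ((-2) * r * Real.pi * (Real.sin (2 * Real.pi * t) * (deriv (deriv lam₁) t)) + (-8) * r * Real.pi ^ 2 * (deriv lam₁ t * (Real.cos (2 * Real.pi * t))) + 8 * r * Real.pi ^ 3 * (lam₁ t * (Real.sin (2 * Real.pi * t))) + (-2) * r * Q * Real.pi * (Real.cos (2 * Real.pi * t) * (deriv (deriv lam₂) t)) + 8 * r * Q * Real.pi ^ 2 * (deriv lam₂ t * (Real.sin (2 * Real.pi * t))) + 8 * r * Q * Real.pi ^ 3 * (lam₂ t * (Real.cos (2 * Real.pi * t))) + (-4) * r ^ 3 * Real.pi ^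 2 * (deriv lam₁ t * (Real.cos (2 * Real.pi * t))) + 8 * r ^ 3 * Real.pi ^ 3 * (lam₁ t * (Real.sin (2 * Real.pi * t)))) t := by
      have h := (((((((hd1 t).mul ((hS t))).const_mul ((-2) * r * Real.pi))).add (((hl1 t).mul ((hC t))).const_mul ((-4) * r * Real.pi ^ 2))).add (((hd2 t).mul ((hC t))).const_mul ((-2) * r * Q * Real.pi))).add (((hl2 t).mul ((hS t))).const_mul (4 * r * Q * Real.pi ^ 2))).add (((hl1 t).mul ((hC t))).const_mul ((-4) * r ^ 3 * Real.pi ^ 2))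
      exact h.congr_deriv (by ring)
    have h3 : HasDerivAt (fun x : ℝ => (-2) * r ^ 2 * Real.pi * (deriv lam₂ x) + (-4) * r ^ 2 * Q * Real.pi ^ 2 * (lam₁ x)) ((-2) * r ^ 2 * Real.pi * (deriv (deriv lam₂) t) + (-4) * r ^ 2 * Q * Real.pi ^ 2 * (deriv lam₁ t)) t := by
      have h := ((((hd2 t)).const_mul ((-2) * r ^ 2 * Real.pi))).add (((hl1 t)).const_mul ((-4) * r ^ 2 * Q * Real.pi ^ 2))
      exact h.congr_deriv (by ring)
    exact ((h1.smul_const v₀).add (h2.smul_const v₁)).add (h3.smul_const w)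
  have hU : covDt α (covDt α V) t = ((2 * r * Real.pi * (Real.cos (2 * Real.pi * t) * (deriv (deriv lam₁) t)) + (-8) * r * Real.pi ^ 2 * (deriv lam₁ t * (Real.sin (2 * Real.pi * t))) + (-8) * r * Real.pi ^ 3 * (lam₁ t * (Real.cos (2 * Real.pi * t))) + (-2) * r * Q * Real.pi * (Real.sin (2 * Real.pi * t) * (deriv (deriv lam₂) t)) + (-8) * r * Q * Real.pi ^ 2 * (deriv lam₂ t * (Real.cos (2 * Real.pi * t))) + 8 * r * Q * Real.pi ^ 3 * (lam₂ t * (Real.sin (2 * Real.pi * t))) + (-8) * r ^ 3 * Real.pi ^ 2 * (deriv lam₁ t * (Real.sin (2 * Real.pi * t))) + (-8) * r ^ 3 * Real.pi ^ 3 * (lam₁ t * (Real.cos (2 * Real.pi * t))) + 8 * r ^ 3 * Q * Real.pi ^ 3 * (lam₂ t * (Real.sin (2 * Real.pi * t))) : ℝ)) • v₀ + (((-2) * r * Real.pi * (Real.sin (2 * Real.pi * t) * (deriv (deriv lam₁) t)) + (-8) * r * Real.pi ^ 2 * (deriv lam₁ t * (Real.cos (2 * Real.pi * t))) + 8 * r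 * Real.pi ^ 3 * (lam₁ t * (Real.sin (2 * Real.pi * t))) + (-2) * r * Q * Real.pi * (Real.cos (2 * Real.pi * t) * (deriv (deriv lam₂) t)) + 8 * r * Q * Real.pi ^ 2 * (deriv lam₂ t * (Real.sin (2 * Real.pi * t))) + 8 * r * Q * Real.pi ^ 3 * (lam₂ t * (Real.cos (2 * Real.pi * t))) + (-8) * r ^ 3 * Real.pi ^ 2 * (deriv lam₁ t * (Real.cos (2 * Real.pi * t))) + 8 * r ^ 3 * Real.pi ^ 3 * (lam₁ t * (Real.sin (2 * Real.pi * t))) + 8 * r ^ 3 * Q * Real.pi ^ 3 * (lam₂ t * (Real.cos (2 * Real.pi * t))) : ℝ)) • v₁ + (((-2) * r ^ 2 * Real.pi * (deriv (deriv lam₂) t) + 8 * r ^ 2 * Real.pi ^ 3 * (lam₂ t) + (-8) * r ^ 2 * Q * Real.pi ^ 2 * (deriv lam₁ t) + 8 * r ^ 4 * Real.pi ^ 3 * (lam₂ t) : ℝ)) • w := by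
    show deriv (covDt α V) t + mink (deriv (covDt α V) t) (α t) • α t = _
    rw [hWAt.deriv, hαu t, mink_expand hsys]
    match_scalars
    all_goals first | (linear_combination ((-8) * r ^ 3 * Real.pi ^ 2 * (deriv lam₁ t * (Real.sin (2 * Real.pi * t))) + (-2) * r ^ 3 * Q * Real.pi * (Real.sin (2 * Real.pi * t) * (deriv (deriv lam₂) t)) + 8 * r ^ 3 * Q * Real.pi ^ 3 * (lam₂ t * (Real.sin (2 * Real.pi * t))) + (-4) * r ^ 5 * Real.pi ^ 2 * (deriv lam₁ t * (Real.sin (2 * Real.pi * t)))) * Real.sin_sq_add_cos_sq (2 * Real.pi * t) + (4 * r ^ 3 * Real.pi ^ 2 * (deriv lam₁ t * (Real.sin (2 * Real.pi * t)))) * hQ2) | (linear_combination ((-8) * r ^ 3 * Real.pi ^ 2 * (deriv lam₁ t * (Real.cos (2 * Real.pi * t))) + (-2) * r ^ 3 * Q * Real.pi * (Real.cos (2 * Real.pi * t) * (deriv (deriv lam₂) t)) + 8 * r ^ 3 * Q * Real.pi ^ 3 * (lam₂ t * (Real.cos (2 * Real.pi * t))) + (-4) * r ^ 5 * Real.pi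 ^ 2 * (deriv lam₁ t * (Real.cos (2 * Real.pi * t)))) * Real.sin_sq_add_cos_sq (2 * Real.pi * t) + (4 * r ^ 3 * Real.pi ^ 2 * (deriv lam₁ t * (Real.cos (2 * Real.pi * t)))) * hQ2) | (linear_combination ((-8) * r ^ 2 * Q * Real.pi ^ 2 * (deriv lam₁ t) + (-2) * r ^ 2 * Q ^ 2 * Real.pi * (deriv (deriv lam₂) t) + 8 * r ^ 2 * Q ^ 2 * Real.pi ^ 3 * (lam₂ t) + (-4) * r ^ 4 * Q * Real.pi ^ 2 * (deriv lam₁ t)) * Real.sin_sq_add_cos_sq (2 * Real.pi * t) + (8 * r ^ 2 * Real.pi ^ 3 * (lam₂ t) + 4 * r ^ 2 * Q * Real.pi ^ 2 * (deriv lam₁ t)) * hQ2) | (ring1)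
  have hAA : mink (deriv α t) (deriv α t) = (2 * Real.pi * r) ^ 2 := by
    rw [(hαAt t).deriv, mink_expand hsys]
    linear_combination (4 * r ^ 2 * Real.pi ^ 2) * Real.sin_sq_add_cos_sq (2 * Real.pi * t)
  have hM : mink (covDt α V t) (deriv α t) = 4 * r ^ 2 * Real.pi ^ 2 * (deriv lam₁ t) + (-8) * r ^ 2 * Q * Real.pi ^ 3 * (lam₂ t) := by
    rw [hWcov t, (hαAt t).deriv, mink_expand hsys]
    linear_combination (4 * r ^ 2 * Real.pi ^ 2 * (deriv lam₁ t) + (-8) * r ^ 2 * Q * Real.pi ^ 3 * (lam₂ t)) * Real.sin_sq_add_cos_sq (2 * Real.pi * t)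
  have hc3 : (2 * Real.pi * r)⁻¹ * (4 * r ^ 2 * Real.pi ^ 2 * (deriv lam₁ t) + (-8) * r ^ 2 * Q * Real.pi ^ 3 * (lam₂ t)) * (Q / r) = 2 * Q * Real.pi * (deriv lam₁ t) + (-4) * Q ^ 2 * Real.pi ^ 2 * (lam₂ t) := by
    field_simp
    try ring
  have hc5 : 2 * Real.pi * r * (Q / r) = 2 * Q * Real.pi := by
    field_simp
    try ring
  simp only [linOp]
  rw [hU, hAA, Real.sqrt_sq (mul_nonneg (by positivity) hr.le), hM, hk0, hc3, hc5, hBt t, hVt t, hWcov t, (hαAt t).deriv, hαu t, hQdef]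
  simp only [mink_expand hsys, mcross_expand hsys]
  match_scalars
  all_goals first | (linear_combination ((-8) * r ^ 3 * Real.pi ^ 3 * (lam₁ t * (Real.cos (2 * Real.pi * t)))) * Real.sin_sq_add_cos_sq (2 * Real.pi * t) + ((-8) * r * Real.pi ^ 2 * (deriv lam₁ t * (Real.sin (2 * Real.pi * t))) + (-8) * r * Real.pi ^ 3 * (lam₁ t * (Real.cos (2 * Real.pi * t))) + (-4) * r * Q * Real.pi ^ 2 * (deriv lam₂ t * (Real.cos (2 * Real.pi * t))) + 16 * r * Q * Real.pi ^ 3 * (lam₂ t * (Real.sin (2 * Real.pi * t)))) * hQ2) | (linear_combination (8 * r ^ 3 * Real.pi ^ 3 * (lam₁ t * (Real.sin (2 * Real.pi * t)))) * Real.sin_sq_add_cos_sq (2 * Real.pi * t) + ((-8) * r * Real.pi ^ 2 * (deriv lam₁ t * (Real.cos (2 * Real.pi * t))) + 8 * r * Real.pi ^ 3 * (lam₁ t * (Real.sin (2 * Real.pi * t))) + 4 * r * Q * Real.pi ^ 2 * (deriv lam₂ t * (Real.sin (2 * Real.pi * t))) + 16 * r * Q * Real.pi ^ 3 * (lam₂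 t * (Real.cos (2 * Real.pi * t)))) * hQ2) | (linear_combination ((-2) * r ^ 2 * Real.pi * (deriv (deriv lam₂) t) + (-8) * r ^ 2 * Real.pi ^ 3 * (lam₂ t) + (-8) * r ^ 2 * Q * Real.pi ^ 2 * (deriv lam₁ t) + 16 * r ^ 2 * Q ^ 2 * Real.pi ^ 3 * (lam₂ t) + (-8) * r ^ 4 * Real.pi ^ 3 * (lam₂ t)) * Real.sin_sq_add_cos_sq (2 * Real.pi * t) + (16 * r ^ 2 * Real.pi ^ 3 * (lam₂ t)) * hQ2) | (ring1)
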